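/- Let Ω = [−3,3] ⊂ ℝ. For a ≥ 0 define R_a : [−3,3] → [−3,3] by R_a(x) = x for |x| ≥ 1 and R_a(x) = x + (1/10)·cos²(πx/2)·cos(ax) for |x| < 1. For a probability measure μ on Ω set κ(μ) := ∫_{[−2,−1]} (2−|x|) dμ(x) + μ([−1,1]) + ∫_{[1,2]} (2−x) dμ(x), a(μ) := 1/κ(μ) if κ(μ) > 0 and a(μ) := 0 otherwise, and f(μ) := (R_{a(μ)})_# μ. Then f maps P([−3,3]) to P([−3,3]), f is a support-preserving map, and f is continuous in the 1-Wasserstein topology. -/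

import Mathlib

open MeasureTheory Filter Set
open scoped ENNReal

/-- The 1-Wasserstein distance, via Kantorovich–Rubinstein duality. -/
noncomputable def W1 {E : Type*} [MeasurableSpace E] [PseudoMetricSpace E]
    (μ ν : Measure E) : ℝ :=
  ⨆ φ : {φ : E → ℝ // LipschitzWith 1 φ}, ((∫ x, φ.1 x ∂μ) - ∫ x, φ.1 x ∂ν)

/-- `P(Ω)`: the Borel probability measures supported in `Ω`. -/
def ProbOn {E : Type*} [MeasurableSpace E] (Ω : Set E) : Set (Measure E) :=
  {μ | IsProbabilityMeasure μ ∧ μ Ωᶜ = 0}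

/-- A map `f : P(Ω) → P(Ω)` is support-preserving. -/
def SupportPreservingProb {E : Type*} [MeasurableSpace E]
    (Ω : Set E) (f : Measure E → Measure E) : Prop :=
  ∀ n : ℕ, 0 < n → ∀ x : Fin n → E, (∀ i, x i ∈ Ω) →
    ∃ y : Fin n → E, (∀ i, y i ∈ Ω) ∧
      f (∑ i, ((n : ℝ≥0∞))⁻¹ • Measure.dirac (x i))
        = ∑ i, ((n : ℝ≥0∞))⁻¹ • Measure.dirac (y i) ∧
      ∀ i j, x i = x j → y i = y j

/-- `R_a(x) = x + (1/10)·cos²(πx/2)·cos(ax)` for `|x| < 1`, and `R_a(x) = x` otherwise. -/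
noncomputable def Rmap (a x : ℝ) : ℝ :=
  if |x| < 1 then x + (1 / 10) * Real.cos (Real.pi * x / 2) ^ 2 * Real.cos (a * x) else x

/-- `κ(μ) = ∫_{[-2,-1)} (2-|x|) dμ + μ([-1,1]) + ∫_{(1,2]} (2-x) dμ`. -/
noncomputable def kappa (μ : Measure ℝ) : ℝ :=
  (∫ x in Set.Ico (-2 : ℝ) (-1), (2 - |x|) ∂μ)
    + (μ (Set.Icc (-1 : ℝ) 1)).toReal
    + ∫ x in Set.Ioc (1 : ℝ) 2, (2 - x) ∂μ

/-- `a(μ) = 1/κ(μ)` if `κ(μ) > 0`, and `a(μ) = 0` otherwise. -/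
noncomputable def amu (μ : Measure ℝ) : ℝ :=
  if 0 < kappa μ then (kappa μ)⁻¹ else 0

/-- The counterexample map `f(μ) = (R_{a(μ)})_♯ μ`. -/
noncomputable def fCounter (μ : Measure ℝ) : Measure ℝ :=
  Measure.map (Rmap (amu μ)) μ


lemma cos_lip (a b : ℝ) : |Real.cos a - Real.cos b| ≤ |a - b| := by
  rw [Real.cos_sub_cos, abs_mul, abs_mul]
  have h1 : |Real.sin ((a+b)/2)| ≤ 1 := Real.abs_sin_le_one _
  have h2 : |Real.sin ((a-b)/2)| ≤ |(a-b)/2| := Real.abs_sin_le_abs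
  calc |(-2 : ℝ)| * |Real.sin ((a+b)/2)| * |Real.sin ((a-b)/2)|
      ≤ 2 * 1 * |(a-b)/2| := by
        rw [abs_neg, abs_two]; gcongr
    _ = |a - b| := by rw [abs_div]; simp [abs_two]; ring

lemma cos_sq_lip (x y : ℝ) :
    |Real.cos (Real.pi * x / 2) ^ 2 - Real.cos (Real.pi * y / 2) ^ 2| ≤ 2 * |x - y| := by
  have hx : Real.cos (Real.pi * x / 2) ^ 2 = 1/2 + Real.cos (2 * (Real.pi * x / 2)) / 2 :=
    Real.cos_sq _
  have hy : Real.cos (Real.pi * y / 2) ^ 2 = 1/2 + Real.cos (2 * (Real.pi * y / 2)) / 2 :=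
    Real.cos_sq _
  rw [hx, hy]
  have := cos_lip (2 * (Real.pi * x / 2)) (2 * (Real.pi * y / 2))
  have hpi : Real.pi ≤ 4 := Real.pi_le_four
  have h0 : (0:ℝ) ≤ |x - y| := abs_nonneg _
  calc |(1/2 + Real.cos (2 * (Real.pi * x / 2)) / 2) - (1/2 + Real.cos (2 * (Real.pi * y / 2)) / 2)|
      = |Real.cos (2 * (Real.pi * x / 2)) - Real.cos (2 * (Real.pi * y / 2))| / 2 := by
        rw [show (1/2 + Real.cos (2 * (Real.pi * x / 2)) / 2) - (1/2 + Real.cos (2 * (Real.pi * y / 2)) / 2) = (Real.cos (2 * (Real.pi * x / 2)) - Real.cos (2 * (Real.pi * y / 2))) / 2 by ring, abs_div, abs_two]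
    _ ≤ |2 * (Real.pi * x / 2) - 2 * (Real.pi * y / 2)| / 2 := by gcongr
    _ = Real.pi * |x - y| / 2 := by
        rw [show 2 * (Real.pi * x / 2) - 2 * (Real.pi * y / 2) = Real.pi * (x - y) by ring,
          abs_mul, abs_of_nonneg Real.pi_pos.le]
    _ ≤ 2 * |x - y| := by nlinarith

/-! ### Rmap basic lemmas -/

lemma Rmap_of_not_lt {a x : ℝ} (h : ¬ |x| < 1) : Rmap a x = x := if_neg h

lemma Rmap_of_lt {a x : ℝ} (h : |x| < 1) :
    Rmap a x = x + (1 / 10) * Real.cos (Real.pi * x / 2) ^ 2 * Real.cos (a * x) := if_pos h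

lemma Rmap_sub_self_abs (a x : ℝ) : |Rmap a x - x| ≤ 1 / 10 := by
  by_cases h : |x| < 1
  · rw [Rmap_of_lt h]
    have h1 : |Real.cos (Real.pi * x / 2)| ≤ 1 := Real.abs_cos_le_one _
    have h2 : |Real.cos (a * x)| ≤ 1 := Real.abs_cos_le_one _
    have : |x + 1 / 10 * Real.cos (Real.pi * x / 2) ^ 2 * Real.cos (a * x) - x|
        = 1/10 * (|Real.cos (Real.pi * x / 2)|^2 * |Real.cos (a * x)|) := by
      rw [show x + 1 / 10 * Real.cos (Real.pi * x / 2) ^ 2 * Real.cos (a * x) - x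
          = 1/10 * (Real.cos (Real.pi * x / 2) ^ 2 * Real.cos (a * x)) by ring,
        abs_mul, abs_mul, abs_pow]
      norm_num
    rw [this]
    nlinarith [abs_nonneg (Real.cos (Real.pi * x / 2)), abs_nonneg (Real.cos (a * x))]
  · rw [Rmap_of_not_lt h]; simp

lemma Rmap_mapsTo (a : ℝ) : MapsTo (Rmap a) (Icc (-3:ℝ) 3) (Icc (-3:ℝ) 3) := by
  intro x hx
  by_cases h : |x| < 1
  · have h1 := abs_lt.mp h
    have h2 := abs_le.mp (Rmap_sub_self_abs a x)
    constructor
    · nlinarith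
    · nlinarith
  · rw [Rmap_of_not_lt h]; exact hx

lemma cos_sq_bd {x z : ℝ} (hz : Real.cos (Real.pi * z / 2) = 0) :
    Real.cos (Real.pi * x / 2) ^ 2 ≤ 2 * |x - z| := by
  have := cos_sq_lip x z
  rw [hz] at this
  simpa using (le_abs_self _).trans (by simpa using this)

lemma cos_pm_one (z : ℝ) (hz : z = 1 ∨ z = -1) : Real.cos (Real.pi * z / 2) = 0 := by
  rcases hz with h | h <;> subst h
  · rw [mul_one]; exact Real.cos_pi_div_two
  · rw [show Real.pi * (-1) / 2 = -(Real.pi / 2) by ring, Real.cos_neg]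
    exact Real.cos_pi_div_two

-- mixed case helper: |x| < 1 ≤ |y|
lemma Rmap_mixed (a x y : ℝ) (hx : |x| < 1) (hy : ¬ |y| < 1) :
    |(1 / 10) * Real.cos (Real.pi * x / 2) ^ 2 * Real.cos (a * x)| ≤ (2/10) * |x - y| := by
  have hy1 : 1 ≤ |y| := not_lt.mp hy
  have hxx := abs_lt.mp hx
  have hcos : |Real.cos (a * x)| ≤ 1 := Real.abs_cos_le_one _
  have hsq : (0:ℝ) ≤ Real.cos (Real.pi * x / 2) ^ 2 := sq_nonneg _
  rw [abs_mul, abs_mul, abs_pow, sq_abs]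
  have habs : |(1:ℝ)/10| = 1/10 := by norm_num
  rw [habs]
  rcases le_or_gt 1 y with h1 | h1
  · have hb : Real.cos (Real.pi * x / 2) ^ 2 ≤ 2 * |x - (1:ℝ)| :=
      cos_sq_bd (cos_pm_one 1 (Or.inl rfl))
    have hxy : |x - (1:ℝ)| ≤ |x - y| := by
      rw [abs_of_nonpos (by linarith), abs_of_nonpos (by linarith)]; linarith
    nlinarith [abs_nonneg (Real.cos (a*x))]
  · have hy2 : y ≤ -1 := by
      rcases abs_cases y with ⟨h2, _⟩ | ⟨h2, _⟩ <;> linarith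
    have hb : Real.cos (Real.pi * x / 2) ^ 2 ≤ 2 * |x - (-1:ℝ)| :=
      cos_sq_bd (cos_pm_one (-1) (Or.inr rfl))
    have hxy : |x - (-1:ℝ)| ≤ |x - y| := by
      rw [abs_of_nonneg (by linarith), abs_of_nonneg (by linarith)]; linarith
    nlinarith [abs_nonneg (Real.cos (a*x))]

-- pointwise Lipschitz estimate
lemma Rmap_dist_le (a : ℝ) (x y : ℝ) :
    |Rmap a x - Rmap a y| ≤ (2 + |a|) * |x - y| := by
  have ha : (0:ℝ) ≤ |a| := abs_nonneg _
  have hd : (0:ℝ) ≤ |x - y| := abs_nonneg _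
  by_cases hx : |x| < 1 <;> by_cases hy : |y| < 1
  · rw [Rmap_of_lt hx, Rmap_of_lt hy]
    have e : x + 1 / 10 * Real.cos (Real.pi * x / 2) ^ 2 * Real.cos (a * x)
        - (y + 1 / 10 * Real.cos (Real.pi * y / 2) ^ 2 * Real.cos (a * y))
        = (x - y) + 1/10 * ((Real.cos (Real.pi * x / 2) ^ 2 - Real.cos (Real.pi * y / 2) ^ 2)
            * Real.cos (a * x))
          + 1/10 * (Real.cos (Real.pi * y / 2) ^ 2 * (Real.cos (a * x) - Real.cos (a * y))) := by
      ring
    rw [e]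
    have t1 : |(Real.cos (Real.pi * x / 2) ^ 2 - Real.cos (Real.pi * y / 2) ^ 2)
        * Real.cos (a * x)| ≤ 2 * |x - y| := by
      rw [abs_mul]
      have := cos_sq_lip x y
      nlinarith [Real.abs_cos_le_one (a*x), abs_nonneg ((Real.cos (Real.pi * x / 2) ^ 2 - Real.cos (Real.pi * y / 2) ^ 2))]
    have t2 : |Real.cos (Real.pi * y / 2) ^ 2 * (Real.cos (a * x) - Real.cos (a * y))|
        ≤ |a| * |x - y| := by
      rw [abs_mul]
      have hc := cos_lip (a*x) (a*y)
      have : |a * x - a * y| = |a| * |x - y| := by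
        rw [show a*x - a*y = a*(x-y) by ring, abs_mul]
      rw [this] at hc
      have h2 : |Real.cos (Real.pi * y / 2) ^ 2| ≤ 1 := by
        rw [abs_pow, sq_abs]
        exact Real.cos_sq_le_one _
      nlinarith [abs_nonneg (Real.cos (a * x) - Real.cos (a * y)), sq_nonneg (Real.cos (Real.pi*y/2))]
    calc |(x - y) + 1/10 * ((Real.cos (Real.pi * x / 2) ^ 2 - Real.cos (Real.pi * y / 2) ^ 2)
            * Real.cos (a * x))
          + 1/10 * (Real.cos (Real.pi * y / 2) ^ 2 * (Real.cos (a * x) - Real.cos (a * y)))|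
        ≤ |x - y| + |1/10 * ((Real.cos (Real.pi * x / 2) ^ 2 - Real.cos (Real.pi * y / 2) ^ 2)
            * Real.cos (a * x))|
          + |1/10 * (Real.cos (Real.pi * y / 2) ^ 2 * (Real.cos (a * x) - Real.cos (a * y)))| :=
          (abs_add_le _ _).trans (by gcongr; exact abs_add_le _ _)
      _ ≤ |x - y| + 1/10 * (2 * |x - y|) + 1/10 * (|a| * |x - y|) := by
          have u1 : |1/10 * ((Real.cos (Real.pi * x / 2) ^ 2 - Real.cos (Real.pi * y / 2) ^ 2)
              * Real.cos (a * x))| = 1/10 * |(Real.cos (Real.pi * x / 2) ^ 2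
              - Real.cos (Real.pi * y / 2) ^ 2) * Real.cos (a * x)| := by
            rw [abs_mul]; norm_num
          have u2 : |1/10 * (Real.cos (Real.pi * y / 2) ^ 2
              * (Real.cos (a * x) - Real.cos (a * y)))| = 1/10 * |Real.cos (Real.pi * y / 2) ^ 2
              * (Real.cos (a * x) - Real.cos (a * y))| := by
            rw [abs_mul]; norm_num
          rw [u1, u2]
          linarith [t1, t2]
      _ ≤ (2 + |a|) * |x - y| := by nlinarith
  · rw [Rmap_of_lt hx, Rmap_of_not_lt hy]
    have := Rmap_mixed a x y hx hy
    calc |x + 1 / 10 * Real.cos (Real.pi * x / 2) ^ 2 * Real.cos (a * x) - y|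
        ≤ |x - y| + |1 / 10 * Real.cos (Real.pi * x / 2) ^ 2 * Real.cos (a * x)| := by
          rw [show x + 1 / 10 * Real.cos (Real.pi * x / 2) ^ 2 * Real.cos (a * x) - y
            = (x - y) + 1 / 10 * Real.cos (Real.pi * x / 2) ^ 2 * Real.cos (a * x) by ring]
          exact abs_add_le _ _
      _ ≤ |x - y| + 2/10 * |x - y| := by gcongr
      _ ≤ (2 + |a|) * |x - y| := by nlinarith
  · rw [Rmap_of_not_lt hx, Rmap_of_lt hy]
    have := Rmap_mixed a y x hy hx
    have hsym : |y - x| = |x - y| := abs_sub_comm y x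
    rw [hsym] at this
    calc |x - (y + 1 / 10 * Real.cos (Real.pi * y / 2) ^ 2 * Real.cos (a * y))|
        ≤ |x - y| + |1 / 10 * Real.cos (Real.pi * y / 2) ^ 2 * Real.cos (a * y)| := by
          rw [show x - (y + 1 / 10 * Real.cos (Real.pi * y / 2) ^ 2 * Real.cos (a * y))
            = (x - y) + -(1 / 10 * Real.cos (Real.pi * y / 2) ^ 2 * Real.cos (a * y)) by ring]
          exact (abs_add_le _ _).trans (by rw [abs_neg])
      _ ≤ |x - y| + 2/10 * |x - y| := by gcongr
      _ ≤ (2 + |a|) * |x - y| := by nlinarith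
  · rw [Rmap_of_not_lt hx, Rmap_of_not_lt hy]; nlinarith

lemma Rmap_lipschitz (a : ℝ) : LipschitzWith (Real.toNNReal (2 + |a|)) (Rmap a) := by
  apply LipschitzWith.of_dist_le_mul
  intro x y
  rw [Real.dist_eq, Real.dist_eq, Real.coe_toNNReal _ (by positivity)]
  exact Rmap_dist_le a x y

lemma continuous_Rmap (a : ℝ) : Continuous (Rmap a) := (Rmap_lipschitz a).continuous

lemma measurable_Rmap (a : ℝ) : Measurable (Rmap a) := (continuous_Rmap a).measurable

lemma Rmap_Rmap_dist (a a' x : ℝ) (c : ℝ) (hc0 : 0 ≤ c)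
    (h : ∀ z : ℝ, |z| < 1 → 1/10 * |Real.cos (a * z) - Real.cos (a' * z)| ≤ c) :
    |Rmap a x - Rmap a' x| ≤ Set.indicator (Icc (-1:ℝ) 1) (fun _ => c) x := by
  by_cases hx : |x| < 1
  · have hmem : x ∈ Icc (-1:ℝ) 1 := by
      have := abs_lt.mp hx; exact ⟨this.1.le, this.2.le⟩
    rw [Set.indicator_of_mem hmem, Rmap_of_lt hx, Rmap_of_lt hx]
    have h2 : |Real.cos (Real.pi * x / 2)| ≤ 1 := Real.abs_cos_le_one _
    have key := h x hx
    have : x + 1 / 10 * Real.cos (Real.pi * x / 2) ^ 2 * Real.cos (a * x)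
        - (x + 1 / 10 * Real.cos (Real.pi * x / 2) ^ 2 * Real.cos (a' * x))
        = Real.cos (Real.pi * x / 2) ^ 2 * (1/10 * (Real.cos (a * x) - Real.cos (a' * x))) := by
      ring
    rw [this, abs_mul, abs_pow]
    calc |Real.cos (Real.pi * x / 2)| ^ 2 * |1/10 * (Real.cos (a * x) - Real.cos (a' * x))|
        ≤ 1 * |1/10 * (Real.cos (a * x) - Real.cos (a' * x))| := by
          apply mul_le_mul_of_nonneg_right _ (abs_nonneg _)
          nlinarith [abs_nonneg (Real.cos (Real.pi * x / 2))]
      _ = 1/10 * |Real.cos (a * x) - Real.cos (a' * x)| := by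
          rw [one_mul, abs_mul]; norm_num
      _ ≤ c := key
  · rw [Rmap_of_not_lt hx, Rmap_of_not_lt hx, sub_self, abs_zero]
    exact Set.indicator_apply_nonneg (fun _ => hc0)

/-! ### The weight function g -/

noncomputable def gfun (x : ℝ) : ℝ := max 0 (min 1 (2 - |x|))

lemma gfun_continuous : Continuous gfun :=
  continuous_const.max (continuous_const.min (continuous_const.sub continuous_abs))

lemma gfun_lipschitz : LipschitzWith 1 gfun := by
  have h1 : LipschitzWith 1 (fun x : ℝ => 2 - |x|) := by
    apply LipschitzWith.of_dist_le_mul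
    intro a b
    rw [Real.dist_eq, Real.dist_eq]
    simp only [NNReal.coe_one, one_mul]
    calc |2 - |a| - (2 - |b|)| = |(|b| - |a|)| := by ring_nf
      _ ≤ |b - a| := abs_abs_sub_abs_le_abs_sub b a
      _ = |a - b| := abs_sub_comm _ _
  have h2 : LipschitzWith 1 (fun x : ℝ => min 1 (2 - |x|)) := by
    simpa using ((LipschitzWith.const' (1:ℝ)).weaken (zero_le_one)).min h1
  rw [show gfun = fun x => max 0 (min 1 (2 - |x|)) from rfl]
  simpa [gfun] using ((LipschitzWith.const' (0:ℝ)).weaken (zero_le_one)).max h2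

lemma gfun_compactSupport : HasCompactSupport gfun := by
  apply HasCompactSupport.intro (isCompact_Icc (a := (-2:ℝ)) (b := 2))
  intro x hx
  simp only [mem_Icc, not_and_or, not_le] at hx
  have : 2 - |x| < 0 := by
    rcases hx with h | h
    · rw [abs_of_neg (by linarith)]; linarith
    · rw [abs_of_pos (by linarith)]; linarith
  simp only [gfun]
  rw [min_eq_right (by linarith), max_eq_left (by linarith)]

lemma gfun_integrable (μ : Measure ℝ) [IsFiniteMeasure μ] : Integrable gfun μ := by
  have : ∃ C, ∀ x, |gfun x| ≤ C := by
    refine ⟨1, fun x => ?_⟩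
    have h0 : 0 ≤ gfun x := le_max_left _ _
    rw [abs_of_nonneg h0]
    simp only [gfun]
    rcases le_or_gt (min 1 (2 - |x|)) 0 with h | h
    · rw [max_eq_left h]; norm_num
    · rw [max_eq_right h.le]; exact min_le_left _ _
  obtain ⟨C, hC⟩ := this
  exact (integrable_const C).mono' gfun_continuous.aestronglyMeasurable
    (Filter.Eventually.of_forall (fun x => by rw [Real.norm_eq_abs]; exact hC x))

lemma kappa_eq_integral (μ : Measure ℝ) [IsFiniteMeasure μ] :
    kappa μ = ∫ x, gfun x ∂μ := by
  have hint : Integrable gfun μ := gfun_integrable μ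
  have hIcc : MeasurableSet (Icc (-2:ℝ) 2) := measurableSet_Icc
  have hsplit : ∫ x, gfun x ∂μ
      = (∫ x in Icc (-2:ℝ) 2, gfun x ∂μ) + ∫ x in (Icc (-2:ℝ) 2)ᶜ, gfun x ∂μ := by
    rw [MeasureTheory.integral_add_compl hIcc hint]
  have hcompl : ∫ x in (Icc (-2:ℝ) 2)ᶜ, gfun x ∂μ = 0 := by
    apply MeasureTheory.setIntegral_eq_zero_of_forall_eq_zero
    intro x hx
    simp only [mem_compl_iff, mem_Icc, not_and_or, not_le] at hx
    have : 2 - |x| < 0 := by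
      rcases hx with h | h
      · rw [abs_of_neg (by linarith)]; linarith
      · rw [abs_of_pos (by linarith)]; linarith
    simp only [gfun]
    rw [min_eq_right (by linarith), max_eq_left (by linarith)]
  -- decompose Icc (-2) 2 = Ico (-2) (-1) ∪ Icc (-1) 1 ∪ Ioc 1 2
  have hu1 : Ico (-2:ℝ) (-1) ∪ Icc (-1:ℝ) 1 = Icc (-2:ℝ) 1 :=
    Set.Ico_union_Icc_eq_Icc (by norm_num) (by norm_num)
  have hu2 : Icc (-2:ℝ) 1 ∪ Ioc (1:ℝ) 2 = Icc (-2:ℝ) 2 :=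
    Set.Icc_union_Ioc_eq_Icc (by norm_num) (by norm_num)
  have hdisj1 : Disjoint (Ico (-2:ℝ) (-1)) (Icc (-1:ℝ) 1) := by
    apply Set.disjoint_left.mpr
    rintro x ⟨_, h2⟩ ⟨h3, _⟩; linarith
  have hdisj2 : Disjoint (Icc (-2:ℝ) 1) (Ioc (1:ℝ) 2) := by
    apply Set.disjoint_left.mpr
    rintro x ⟨_, h2⟩ ⟨h3, _⟩; linarith
  have hi : ∀ s : Set ℝ, IntegrableOn gfun s μ := fun s => hint.integrableOn
  have e2 : ∫ x in Icc (-2:ℝ) 2, gfun x ∂μ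
      = (∫ x in Icc (-2:ℝ) 1, gfun x ∂μ) + ∫ x in Ioc (1:ℝ) 2, gfun x ∂μ := by
    rw [← hu2, MeasureTheory.setIntegral_union hdisj2 measurableSet_Ioc (hi _) (hi _)]
  have e1 : ∫ x in Icc (-2:ℝ) 1, gfun x ∂μ
      = (∫ x in Ico (-2:ℝ) (-1), gfun x ∂μ) + ∫ x in Icc (-1:ℝ) 1, gfun x ∂μ := by
    rw [← hu1, MeasureTheory.setIntegral_union hdisj1 measurableSet_Icc (hi _) (hi _)]
  have c1 : ∫ x in Ico (-2:ℝ) (-1), gfun x ∂μ = ∫ x in Ico (-2:ℝ) (-1), (2 - |x|) ∂μ := by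
    apply MeasureTheory.setIntegral_congr_fun measurableSet_Ico
    intro x hx
    obtain ⟨h1, h2⟩ := hx
    have hax : |x| = -x := abs_of_neg (by linarith)
    simp only [gfun, hax]
    rw [min_eq_right (by linarith), max_eq_right (by linarith)]
  have c2 : ∫ x in Icc (-1:ℝ) 1, gfun x ∂μ = (μ (Icc (-1:ℝ) 1)).toReal := by
    have : ∫ x in Icc (-1:ℝ) 1, gfun x ∂μ = ∫ _x in Icc (-1:ℝ) 1, (1:ℝ) ∂μ := by
      apply MeasureTheory.setIntegral_congr_fun measurableSet_Icc
      intro x hx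
      obtain ⟨h1, h2⟩ := hx
      have hax : |x| ≤ 1 := abs_le.mpr ⟨h1, h2⟩
      simp only [gfun]
      rw [min_eq_left (by linarith), max_eq_right (by norm_num)]
    rw [this, MeasureTheory.setIntegral_const, smul_eq_mul, mul_one]; rfl
  have c3 : ∫ x in Ioc (1:ℝ) 2, gfun x ∂μ = ∫ x in Ioc (1:ℝ) 2, (2 - x) ∂μ := by
    apply MeasureTheory.setIntegral_congr_fun measurableSet_Ioc
    intro x hx
    obtain ⟨h1, h2⟩ := hx
    have hax : |x| = x := abs_of_pos (by linarith)
    simp only [gfun, hax]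
    rw [min_eq_right (by linarith), max_eq_right (by linarith)]
  rw [hsplit, hcompl, e2, e1, c1, c2, c3, kappa]
  ring

/-! ### Integrability and W1 machinery -/

lemma ae_mem_of_probOn {μ : Measure ℝ} (hμ : μ ∈ ProbOn (Icc (-3:ℝ) 3)) :
    ∀ᵐ x ∂μ, x ∈ Icc (-3:ℝ) 3 := by
  refine (MeasureTheory.ae_iff).mpr ?_
  rw [show {a : ℝ | ¬ a ∈ Icc (-3:ℝ) 3} = (Icc (-3:ℝ) 3)ᶜ from rfl]
  exact hμ.2

lemma integrable_of_probOn {μ : Measure ℝ} (hμ : μ ∈ ProbOn (Icc (-3:ℝ) 3))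
    {f : ℝ → ℝ} (hf : Continuous f) : Integrable f μ := by
  have hP : IsProbabilityMeasure μ := hμ.1
  obtain ⟨C, hC⟩ := (isCompact_Icc (a := (-3:ℝ)) (b := 3)).exists_bound_of_continuousOn
    hf.continuousOn
  refine (integrable_const C).mono' hf.aestronglyMeasurable ?_
  exact (ae_mem_of_probOn hμ).mono (fun x hx => hC x hx)

instance : Nonempty {φ : ℝ → ℝ // LipschitzWith 1 φ} :=
  ⟨⟨fun _ => 0, (LipschitzWith.const' (0:ℝ)).weaken zero_le_one⟩⟩

lemma integral_sub_apply_zero_abs_le {μ : Measure ℝ} (hμ : μ ∈ ProbOn (Icc (-3:ℝ) 3))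
    {φ : ℝ → ℝ} (hφ : LipschitzWith 1 φ) : |(∫ x, φ x ∂μ) - φ 0| ≤ 3 := by
  have hP : IsProbabilityMeasure μ := hμ.1
  have hint : Integrable φ μ := integrable_of_probOn hμ hφ.continuous
  have heq : (∫ x, φ x ∂μ) - φ 0 = ∫ x, (φ x - φ 0) ∂μ := by
    rw [MeasureTheory.integral_sub hint (integrable_const _), integral_const]
    simp
  rw [heq, ← Real.norm_eq_abs]
  have hb : ∀ᵐ x ∂μ, ‖φ x - φ 0‖ ≤ 3 := by
    refine (ae_mem_of_probOn hμ).mono (fun x hx => ?_)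
    have h1 : dist (φ x) (φ 0) ≤ dist x 0 := by
      simpa using hφ.dist_le_mul x 0
    rw [Real.dist_eq, Real.dist_eq, sub_zero] at h1
    rw [Real.norm_eq_abs]
    have : |x| ≤ 3 := abs_le.mpr ⟨hx.1, hx.2⟩
    linarith
  calc ‖∫ x, (φ x - φ 0) ∂μ‖ ≤ 3 * (μ univ).toReal :=
        norm_integral_le_of_norm_le_const hb
    _ = 3 := by simp

lemma W1_bddAbove {μ ν : Measure ℝ} (hμ : μ ∈ ProbOn (Icc (-3:ℝ) 3))
    (hν : ν ∈ ProbOn (Icc (-3:ℝ) 3)) :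
    BddAbove (Set.range fun φ : {φ : ℝ → ℝ // LipschitzWith 1 φ} =>
      ((∫ x, φ.1 x ∂μ) - ∫ x, φ.1 x ∂ν)) := by
  refine ⟨6, ?_⟩
  rintro r ⟨φ, rfl⟩
  have h1 := abs_le.mp (integral_sub_apply_zero_abs_le hμ φ.2)
  have h2 := abs_le.mp (integral_sub_apply_zero_abs_le hν φ.2)
  simp only
  linarith

lemma diff_le_W1 {μ ν : Measure ℝ} (hμ : μ ∈ ProbOn (Icc (-3:ℝ) 3))
    (hν : ν ∈ ProbOn (Icc (-3:ℝ) 3)) {φ : ℝ → ℝ} (hφ : LipschitzWith 1 φ) :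
    (∫ x, φ x ∂μ) - ∫ x, φ x ∂ν ≤ W1 μ ν :=
  le_ciSup (W1_bddAbove hμ hν) (⟨φ, hφ⟩ : {φ : ℝ → ℝ // LipschitzWith 1 φ})

lemma W1_le {μ ν : Measure ℝ} {c : ℝ}
    (h : ∀ φ : ℝ → ℝ, LipschitzWith 1 φ → (∫ x, φ x ∂μ) - ∫ x, φ x ∂ν ≤ c) :
    W1 μ ν ≤ c :=
  ciSup_le (fun φ => h φ.1 φ.2)

lemma W1_nonneg {μ ν : Measure ℝ} (hμ : μ ∈ ProbOn (Icc (-3:ℝ) 3))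
    (hν : ν ∈ ProbOn (Icc (-3:ℝ) 3)) : 0 ≤ W1 μ ν := by
  have := diff_le_W1 hμ hν ((LipschitzWith.const' (0:ℝ)).weaken zero_le_one)
  simpa using this

lemma abs_kappa_sub_le {μ ν : Measure ℝ} (hμ : μ ∈ ProbOn (Icc (-3:ℝ) 3))
    (hν : ν ∈ ProbOn (Icc (-3:ℝ) 3)) : |kappa μ - kappa ν| ≤ W1 μ ν := by
  have hPμ : IsProbabilityMeasure μ := hμ.1
  have hPν : IsProbabilityMeasure ν := hν.1
  rw [kappa_eq_integral μ, kappa_eq_integral ν]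
  rw [abs_le]
  constructor
  · have hneg : LipschitzWith 1 (fun x => -(gfun x)) := gfun_lipschitz.neg
    have h2 := diff_le_W1 hμ hν hneg
    rw [MeasureTheory.integral_neg, MeasureTheory.integral_neg] at h2
    linarith
  · exact diff_le_W1 hμ hν gfun_lipschitz

lemma measure_Icc_le_kappa (ν : Measure ℝ) [IsFiniteMeasure ν] :
    (ν (Icc (-1:ℝ) 1)).toReal ≤ kappa ν := by
  have h1 : 0 ≤ ∫ x in Ico (-2:ℝ) (-1), (2 - |x|) ∂ν := by
    apply MeasureTheory.setIntegral_nonneg measurableSet_Ico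
    intro x hx
    have := abs_of_neg (show x < 0 by linarith [hx.2])
    rw [this]
    linarith [hx.1]
  have h2 : 0 ≤ ∫ x in Ioc (1:ℝ) 2, (2 - x) ∂ν := by
    apply MeasureTheory.setIntegral_nonneg measurableSet_Ioc
    intro x hx
    linarith [hx.2]
  unfold kappa
  linarith

/-! ### The key estimate -/

lemma fCounter_diff_bound {μ ν : Measure ℝ} (hμ : μ ∈ ProbOn (Icc (-3:ℝ) 3))
    (hν : ν ∈ ProbOn (Icc (-3:ℝ) 3)) {c : ℝ} (hc0 : 0 ≤ c)
    (hcc : ∀ z : ℝ, |z| < 1 →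
      1/10 * |Real.cos (amu μ * z) - Real.cos (amu ν * z)| ≤ c) :
    W1 (fCounter μ) (fCounter ν)
      ≤ (2 + |amu μ|) * W1 μ ν + c * (ν (Icc (-1:ℝ) 1)).toReal := by
  have hPμ : IsProbabilityMeasure μ := hμ.1
  have hPν : IsProbabilityMeasure ν := hν.1
  set a := amu μ with ha
  set a' := amu ν with ha'
  apply W1_le
  intro φ hφ
  have hm1 : ∫ x, φ x ∂(fCounter μ) = ∫ x, φ (Rmap a x) ∂μ := by
    rw [fCounter, MeasureTheory.integral_map (measurable_Rmap a).aemeasurable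
      hφ.continuous.aestronglyMeasurable]
  have hm2 : ∫ x, φ x ∂(fCounter ν) = ∫ x, φ (Rmap a' x) ∂ν := by
    rw [fCounter, MeasureTheory.integral_map (measurable_Rmap a').aemeasurable
      hφ.continuous.aestronglyMeasurable]
  rw [hm1, hm2]
  have hint1μ : Integrable (fun x => φ (Rmap a x)) μ :=
    integrable_of_probOn hμ (hφ.continuous.comp (continuous_Rmap a))
  have hint1ν : Integrable (fun x => φ (Rmap a x)) ν :=
    integrable_of_probOn hν (hφ.continuous.comp (continuous_Rmap a))
  have hint2ν : Integrable (fun x => φ (Rmap a' x)) ν :=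
    integrable_of_probOn hν (hφ.continuous.comp (continuous_Rmap a'))
  -- Step 1 : ∫ φ∘R_a dμ - ∫ φ∘R_a dν ≤ (2+|a|) W1 μ ν
  have hK : (0:ℝ) < 2 + |a| := by positivity
  set K : NNReal := Real.toNNReal (2 + |a|) with hKdef
  have hKcoe : (K : ℝ) = 2 + |a| := Real.coe_toNNReal _ hK.le
  have hKne : (K : ℝ) ≠ 0 := by rw [hKcoe]; exact hK.ne'
  have hψ : LipschitzWith 1 (fun x => (K:ℝ)⁻¹ * φ (Rmap a x)) := by
    apply LipschitzWith.of_dist_le_mul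
    intro x y
    have h1 : dist (φ (Rmap a x)) (φ (Rmap a y)) ≤ (K : ℝ) * dist x y := by
      have := (hφ.comp (Rmap_lipschitz a)).dist_le_mul x y
      simpa [hKdef] using this
    rw [Real.dist_eq, Real.dist_eq] at h1 ⊢
    have e : (K:ℝ)⁻¹ * φ (Rmap a x) - (K:ℝ)⁻¹ * φ (Rmap a y)
        = (K:ℝ)⁻¹ * (φ (Rmap a x) - φ (Rmap a y)) := by ring
    rw [e, abs_mul, abs_of_nonneg (inv_nonneg.mpr (by positivity : (0:ℝ) ≤ (K:ℝ)))]
    rw [NNReal.coe_one, one_mul]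
    calc (K:ℝ)⁻¹ * |φ (Rmap a x) - φ (Rmap a y)| ≤ (K:ℝ)⁻¹ * ((K:ℝ) * |x - y|) := by
          apply mul_le_mul_of_nonneg_left h1 (inv_nonneg.mpr (by positivity))
      _ = |x - y| := by field_simp
  have hstep1 : (∫ x, φ (Rmap a x) ∂μ) - ∫ x, φ (Rmap a x) ∂ν ≤ (2 + |a|) * W1 μ ν := by
    have h := diff_le_W1 hμ hν hψ
    rw [MeasureTheory.integral_const_mul, MeasureTheory.integral_const_mul] at h
    have h2 : (K:ℝ)⁻¹ * ((∫ x, φ (Rmap a x) ∂μ) - ∫ x, φ (Rmap a x) ∂ν) ≤ W1 μ ν := by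
      rw [mul_sub]; exact h
    calc (∫ x, φ (Rmap a x) ∂μ) - ∫ x, φ (Rmap a x) ∂ν
        = (K:ℝ) * ((K:ℝ)⁻¹ * ((∫ x, φ (Rmap a x) ∂μ) - ∫ x, φ (Rmap a x) ∂ν)) := by
          field_simp
      _ ≤ (K:ℝ) * W1 μ ν := by
          apply mul_le_mul_of_nonneg_left h2 (by positivity)
      _ = (2 + |a|) * W1 μ ν := by rw [hKcoe]
  -- Step 2 : ∫ (φ∘R_a - φ∘R_{a'}) dν ≤ c * ν(Icc (-1) 1)
  have hstep2 : (∫ x, φ (Rmap a x) ∂ν) - ∫ x, φ (Rmap a' x) ∂ν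
      ≤ c * (ν (Icc (-1:ℝ) 1)).toReal := by
    rw [← MeasureTheory.integral_sub hint1ν hint2ν]
    have hptw : ∀ x, φ (Rmap a x) - φ (Rmap a' x)
        ≤ Set.indicator (Icc (-1:ℝ) 1) (fun _ => c) x := by
      intro x
      have h1 : φ (Rmap a x) - φ (Rmap a' x) ≤ |Rmap a x - Rmap a' x| := by
        have := hφ.dist_le_mul (Rmap a x) (Rmap a' x)
        rw [Real.dist_eq, Real.dist_eq, NNReal.coe_one, one_mul] at this
        calc φ (Rmap a x) - φ (Rmap a' x) ≤ |φ (Rmap a x) - φ (Rmap a' x)| := le_abs_self _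
          _ ≤ |Rmap a x - Rmap a' x| := this
      exact h1.trans (Rmap_Rmap_dist a a' x c hc0 hcc)
    have hind : Integrable (Set.indicator (Icc (-1:ℝ) 1) (fun _ => c)) ν :=
      (integrable_const c).indicator measurableSet_Icc
    calc ∫ x, (φ (Rmap a x) - φ (Rmap a' x)) ∂ν
        ≤ ∫ x, Set.indicator (Icc (-1:ℝ) 1) (fun _ => c) x ∂ν :=
          MeasureTheory.integral_mono (hint1ν.sub hint2ν) hind hptw
      _ = c * (ν (Icc (-1:ℝ) 1)).toReal := by
          rw [MeasureTheory.integral_indicator_const _ measurableSet_Icc, smul_eq_mul, mul_comm]; rfl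
  linarith

lemma map_finset_sum_dirac {ι : Type*} (s : Finset ι) (c : ℝ≥0∞) (x : ι → ℝ) (f : ℝ → ℝ)
    (hf : Measurable f) :
    Measure.map f (∑ i ∈ s, c • Measure.dirac (x i))
      = ∑ i ∈ s, c • Measure.map f (Measure.dirac (x i)) := by
  classical
  induction s using Finset.induction_on with
  | empty => simp [Measure.map_zero]
  | insert _ _ hnot ih =>
    rw [Finset.sum_insert hnot, Finset.sum_insert hnot, Measure.map_add _ _ hf,
      Measure.map_smul, ih]

theorem fCounter_supportPreserving_continuous' :
    (∀ μ ∈ ProbOn (Set.Icc (-3 : ℝ) 3), fCounter μ ∈ ProbOn (Set.Icc (-3 : ℝ) 3)) ∧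
    SupportPreservingProb (Set.Icc (-3 : ℝ) 3) fCounter ∧
    (∀ μ ∈ ProbOn (Set.Icc (-3 : ℝ) 3), ∀ ε > (0 : ℝ), ∃ δ > (0 : ℝ),
      ∀ ν ∈ ProbOn (Set.Icc (-3 : ℝ) 3),
        W1 μ ν < δ → W1 (fCounter μ) (fCounter ν) < ε) := by
  refine ⟨?_, ?_, ?_⟩
  · -- maps into ProbOn
    intro μ hμ
    have hP : IsProbabilityMeasure μ := hμ.1
    constructor
    · exact Measure.isProbabilityMeasure_map (measurable_Rmap _).aemeasurable
    · rw [fCounter, Measure.map_apply (measurable_Rmap _) measurableSet_Icc.compl]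
      refine measure_mono_null ?_ hμ.2
      intro z hz
      simp only [mem_preimage, mem_compl_iff] at hz ⊢
      exact fun hmem => hz (Rmap_mapsTo _ hmem)
  · -- support-preserving
    intro n hn x hx
    refine ⟨fun i => Rmap (amu (∑ i, ((n : ℝ≥0∞))⁻¹ • Measure.dirac (x i))) (x i),
      fun i => Rmap_mapsTo _ (hx i), ?_, fun i j h => by simp only [h]⟩
    rw [fCounter, map_finset_sum_dirac _ _ _ _ (measurable_Rmap _)]
    congr 1
    ext1 i
    rw [Measure.map_dirac' (measurable_Rmap _)]
  · -- continuity
    intro μ hμ ε hε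
    have hPμ : IsProbabilityMeasure μ := hμ.1
    by_cases hκ : 0 < kappa μ
    · -- main case
      have haeq : amu μ = (kappa μ)⁻¹ := if_pos hκ
      set K : ℝ := 2 + |amu μ| with hKdef
      have hK0 : 0 < K := by positivity
      set c0 : ℝ := K + 1/(10 * kappa μ) + 1 with hc0def
      have hc00 : 0 < c0 := by positivity
      refine ⟨min (kappa μ / 2) (ε / c0), lt_min (by linarith) (by positivity), ?_⟩
      intro ν hν hW
      have hPν : IsProbabilityMeasure ν := hν.1
      have hWnn : 0 ≤ W1 μ ν := W1_nonneg hμ hν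
      have habs := abs_le.mp (abs_kappa_sub_le hμ hν)
      have hWlt1 : W1 μ ν < kappa μ / 2 := lt_of_lt_of_le hW (min_le_left _ _)
      have hWlt2 : W1 μ ν < ε / c0 := lt_of_lt_of_le hW (min_le_right _ _)
      have hκν : kappa μ / 2 ≤ kappa ν := by linarith [habs.2]
      have hκνpos : 0 < kappa ν := by linarith
      have ha'eq : amu ν = (kappa ν)⁻¹ := if_pos hκνpos
      set c : ℝ := 1/10 * |amu μ - amu ν| with hcdef
      have hc0 : 0 ≤ c := by positivity
      have hcc : ∀ z : ℝ, |z| < 1 →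
          1/10 * |Real.cos (amu μ * z) - Real.cos (amu ν * z)| ≤ c := by
        intro z hz
        have h1 := cos_lip (amu μ * z) (amu ν * z)
        have h2 : |amu μ * z - amu ν * z| = |amu μ - amu ν| * |z| := by
          rw [show amu μ * z - amu ν * z = (amu μ - amu ν) * z by ring, abs_mul]
        rw [h2] at h1
        have h3 : |amu μ - amu ν| * |z| ≤ |amu μ - amu ν| * 1 :=
          mul_le_mul_of_nonneg_left hz.le (abs_nonneg _)
        rw [hcdef]
        nlinarith
      have hbound := fCounter_diff_bound hμ hν hc0 hcc
      -- estimate c * ν(Icc)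
      have hνIcc : (ν (Icc (-1:ℝ) 1)).toReal ≤ kappa ν := measure_Icc_le_kappa ν
      have hνIcc0 : 0 ≤ (ν (Icc (-1:ℝ) 1)).toReal := ENNReal.toReal_nonneg
      have hadiff : |amu μ - amu ν| = |kappa ν - kappa μ| / (kappa μ * kappa ν) := by
        rw [haeq, ha'eq, inv_sub_inv hκ.ne' hκνpos.ne', abs_div,
          abs_of_pos (mul_pos hκ hκνpos)]
      have hterm2 : c * (ν (Icc (-1:ℝ) 1)).toReal ≤ W1 μ ν / (10 * kappa μ) := by
        have h4 : |kappa ν - kappa μ| ≤ W1 μ ν := by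
          rw [abs_sub_comm]; exact abs_kappa_sub_le hμ hν
        calc c * (ν (Icc (-1:ℝ) 1)).toReal ≤ c * kappa ν :=
              mul_le_mul_of_nonneg_left hνIcc hc0
          _ = 1/10 * (|kappa ν - kappa μ| / (kappa μ * kappa ν)) * kappa ν := by
              rw [hcdef, hadiff]
          _ = |kappa ν - kappa μ| / (10 * kappa μ) := by field_simp
          _ ≤ W1 μ ν / (10 * kappa μ) := by gcongr
      have htotal : W1 (fCounter μ) (fCounter ν) ≤ c0 * W1 μ ν := by
        calc W1 (fCounter μ) (fCounter ν)
            ≤ K * W1 μ ν + c * (ν (Icc (-1:ℝ) 1)).toReal := hbound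
          _ ≤ K * W1 μ ν + W1 μ ν / (10 * kappa μ) := by linarith
          _ ≤ c0 * W1 μ ν := by
              rw [hc0def]
              have : W1 μ ν / (10 * kappa μ) = (1/(10 * kappa μ)) * W1 μ ν := by ring
              nlinarith
      calc W1 (fCounter μ) (fCounter ν) ≤ c0 * W1 μ ν := htotal
        _ < c0 * (ε / c0) := by exact mul_lt_mul_of_pos_left hWlt2 hc00
        _ = ε := by field_simp
    · -- degenerate case κ(μ) ≤ 0
      have haeq : amu μ = 0 := if_neg hκ
      have hκle : kappa μ ≤ 0 := not_lt.mp hκ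
      refine ⟨ε / 3, by positivity, ?_⟩
      intro ν hν hW
      have hPν : IsProbabilityMeasure ν := hν.1
      have hWnn : 0 ≤ W1 μ ν := W1_nonneg hμ hν
      have habs := abs_le.mp (abs_kappa_sub_le hμ hν)
      have hκν : kappa ν ≤ W1 μ ν := by linarith [habs.1]
      have hcc : ∀ z : ℝ, |z| < 1 →
          1/10 * |Real.cos (amu μ * z) - Real.cos (amu ν * z)| ≤ 1/5 := by
        intro z _
        have h1 : |Real.cos (amu μ * z) - Real.cos (amu ν * z)|
            ≤ |Real.cos (amu μ * z)| + |Real.cos (amu ν * z)| := by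
          have := abs_add_le (Real.cos (amu μ * z)) (-(Real.cos (amu ν * z)))
          simpa [sub_eq_add_neg] using this
        have h2 := Real.abs_cos_le_one (amu μ * z)
        have h3 := Real.abs_cos_le_one (amu ν * z)
        linarith
      have hbound := fCounter_diff_bound hμ hν (by norm_num : (0:ℝ) ≤ 1/5) hcc
      have hνIcc : (ν (Icc (-1:ℝ) 1)).toReal ≤ kappa ν := measure_Icc_le_kappa ν
      have hνIcc0 : 0 ≤ (ν (Icc (-1:ℝ) 1)).toReal := ENNReal.toReal_nonneg
      rw [haeq] at hbound
      simp only [abs_zero] at hbound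
      calc W1 (fCounter μ) (fCounter ν)
          ≤ (2 + 0) * W1 μ ν + 1/5 * (ν (Icc (-1:ℝ) 1)).toReal := hbound
        _ ≤ 2 * W1 μ ν + 1/5 * W1 μ ν := by nlinarith
        _ < ε := by nlinarith
/-- The map `f(μ) = (R_{a(μ)})_♯ μ` maps `P([-3,3])` into `P([-3,3])`, is
support-preserving, and is continuous in the 1-Wasserstein topology. -/
theorem fCounter_supportPreserving_continuous :
    (∀ μ ∈ ProbOn (Set.Icc (-3 : ℝ) 3), fCounter μ ∈ ProbOn (Set.Icc (-3 : ℝ) 3)) ∧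
    SupportPreservingProb (Set.Icc (-3 : ℝ) 3) fCounter ∧
    (∀ μ ∈ ProbOn (Set.Icc (-3 : ℝ) 3), ∀ ε > (0 : ℝ), ∃ δ > (0 : ℝ),
      ∀ ν ∈ ProbOn (Set.Icc (-3 : ℝ) 3),
        W1 μ ν < δ → W1 (fCounter μ) (fCounter ν) < ε) := by
  exact fCounter_supportPreserving_continuous'
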